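/- Let ((F_k,σ_k))_k be a sequence of pairs such that for each k there exists n_k ∈ ℕ with (F_k,σ_k) ∈ 𝒢ₛ_{n_k}, and such that lim_k min(F_k,σ_k) = ∞ (where min(F_k,σ_k) = min{|σ_k∧τ| : τ ∈ F_k}). If F ⊆ 2^ℕ is such that the indicator χ_F is a cluster point of the sequence of indicators (χ_{F_k})_k in the product space {0,1}^{2^ℕ} (in particular, if every finite subset of F is contained in F_k for infinitely many k), then #F ≤ 1. -/

import Mathlib

abbrev Cantor : Type := ℕ → Bool

/- `wedgeLen σ τ` is the length `|σ∧τ| ∈ ℕ∞` of the longest common initial segment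
of `σ` and `τ` (`⊤` if `σ = τ`).  Since wedges `σ∧τ`, `σ∧τ'` of a common sequence are
initial segments of that sequence, comparisons `⊑`, `⊏`, `=` between such wedges are
equivalent to `≤`, `<`, `=` between their lengths. -/
open Classical in
noncomputable def wedgeLen (σ τ : Cantor) : ℕ∞ :=
  if h : σ = τ then ⊤ else ((Nat.find (Function.ne_iff.mp h) : ℕ) : ℕ∞)

/-- `GS n F σ m M` : the pair `(F,σ)` belongs to `𝒢ₛ_n` via a derivation attaching the
values `min(F,σ) = m` and `max(F,σ) = M`. -/
inductive GS : ℕ → Finset Cantor → Cantor → ℕ∞ → ℕ∞ → Prop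
  | base (d : ℕ) (τ : Fin (d + 1) → Cantor) (σ : Cantor) (F : Finset Cantor)
      (h1 : ∀ i, σ ≠ τ i)
      (h2 : 0 < wedgeLen σ (τ 0))
      (h3 : ∀ i j : Fin (d + 1), i < j → wedgeLen σ (τ i) < wedgeLen σ (τ j))
      (h4 : ((d + 1 : ℕ) : ℕ∞) ≤ wedgeLen σ (τ 0))
      (hF : ∀ x, x ∈ F ↔ ∃ i, x = τ i) :
      GS 1 F σ (wedgeLen σ (τ 0)) (wedgeLen σ (τ (Fin.last d)))
  | up (n : ℕ) (F : Finset Cantor) (σ : Cantor) (m M : ℕ∞) :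
      GS n F σ m M → GS (n + 1) F σ m M
  | skipped (n : ℕ) (d : ℕ) (Fs : Fin (d + 1) → Finset Cantor)
      (σs : Fin (d + 1) → Cantor) (mins maxs : Fin (d + 1) → ℕ∞)
      (σ : Cantor) (F : Finset Cantor)
      (hGS : ∀ i, GS n (Fs i) (σs i) (mins i) (maxs i))
      (hdisj : ∀ i j : Fin (d + 1), i ≠ j → ∀ x, x ∈ Fs i → x ∉ Fs j)
      (hne : ∀ i, σ ≠ σs i)
      (h0 : 0 < wedgeLen σ (σs 0))
      (hmono : ∀ i j : Fin (d + 1), i < j → wedgeLen σ (σs i) < wedgeLen σ (σs j))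
      (hlt : ∀ i, wedgeLen σ (σs i) < mins i)
      (hd : ((d + 1 : ℕ) : ℕ∞) ≤ wedgeLen σ (σs 0))
      (hF : ∀ x, x ∈ F ↔ ∃ i, x ∈ Fs i) :
      GS (n + 1) F σ (wedgeLen σ (σs 0)) (wedgeLen σ (σs (Fin.last d)))
  | attached (n : ℕ) (d : ℕ) (Fs : Fin (d + 1) → Finset Cantor)
      (mins maxs : Fin (d + 1) → ℕ∞) (σ : Cantor) (F : Finset Cantor)
      (hGS : ∀ i, GS n (Fs i) σ (mins i) (maxs i))
      (hdisj : ∀ i j : Fin (d + 1), i ≠ j → ∀ x, x ∈ Fs i → x ∉ Fs j)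
      (hord : ∀ i : Fin d, maxs i.castSucc < mins i.succ)
      (hd : ((d + 1 : ℕ) : ℕ∞) ≤ mins 0)
      (hF : ∀ x, x ∈ F ↔ ∃ i, x ∈ Fs i) :
      GS (n + 1) F σ (mins 0) (maxs (Fin.last d))

/-- The indicator function of a set of branches, with values in `Bool`. -/
noncomputable def χS (F : Set Cantor) : Cantor → Bool :=
  fun τ => @ite _ (τ ∈ F) (Classical.propDecidable _) true false

lemma agree_of_le_wedgeLen {σ τ : Cantor} {ℓ N : ℕ} (hℓ : ℓ < N)
    (h : (N : ℕ∞) ≤ wedgeLen σ τ) : σ ℓ = τ ℓ := by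
  by_cases hst : σ = τ
  · rw [hst]
  · unfold wedgeLen at h
    rw [dif_neg hst, Nat.cast_le] at h
    have := Nat.find_min (Function.ne_iff.mp hst) (lt_of_lt_of_le hℓ h)
    simpa using this

theorem cluster_point_subsingleton' (Fk : ℕ → Finset Cantor) (σk : ℕ → Cantor)
    (hmem : ∀ k, ∃ n m M, GS n (Fk k) (σk k) m M)
    (hlim : ∀ N : ℕ, ∃ k₀ : ℕ, ∀ k ≥ k₀, (N : ℕ∞) ≤ (Fk k).inf (wedgeLen (σk k)))
    (F : Set Cantor)
    (hF : MapClusterPt (χS F) Filter.atTop (fun k => χS (↑(Fk k) : Set Cantor))) :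
    F.Subsingleton := by
  intro τ₁ h₁ τ₂ h₂
  by_contra hne
  obtain ⟨ℓ, hℓ⟩ := Function.ne_iff.mp hne
  obtain ⟨k₀, hk₀⟩ := hlim (ℓ + 1)
  -- the open neighborhood of χS F
  have hopen : IsOpen {f : Cantor → Bool | f τ₁ = true ∧ f τ₂ = true} := by
    have h1 : IsOpen ((fun f : Cantor → Bool => f τ₁) ⁻¹' {true}) :=
      (isOpen_discrete ({true} : Set Bool)).preimage (continuous_apply τ₁)
    have h2 : IsOpen ((fun f : Cantor → Bool => f τ₂) ⁻¹' {true}) :=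
      (isOpen_discrete ({true} : Set Bool)).preimage (continuous_apply τ₂)
    exact h1.inter h2
  have hmemU : χS F ∈ {f : Cantor → Bool | f τ₁ = true ∧ f τ₂ = true} := by
    constructor <;> simp [χS, h₁, h₂]
  have hfreq := (mapClusterPt_iff_frequently.mp hF) _ (hopen.mem_nhds hmemU)
  obtain ⟨k, hk, hU⟩ := (Filter.frequently_atTop.mp hfreq) k₀
  have hτ₁ : τ₁ ∈ Fk k := by
    by_contra h; have := hU.1; simp [χS, h] at this
  have hτ₂ : τ₂ ∈ Fk k := by
    by_contra h; have := hU.2; simp [χS, h] at this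
  have hN := hk₀ k hk
  have e₁ : σk k ℓ = τ₁ ℓ :=
    agree_of_le_wedgeLen (Nat.lt_succ_self ℓ)
      (le_trans hN (Finset.inf_le hτ₁))
  have e₂ : σk k ℓ = τ₂ ℓ :=
    agree_of_le_wedgeLen (Nat.lt_succ_self ℓ)
      (le_trans hN (Finset.inf_le hτ₂))
  exact hℓ (e₁ ▸ e₂)

theorem cluster_point_subsingleton (Fk : ℕ → Finset Cantor) (σk : ℕ → Cantor)
    (hmem : ∀ k, ∃ n m M, GS n (Fk k) (σk k) m M)
    (hlim : ∀ N : ℕ, ∃ k₀ : ℕ, ∀ k ≥ k₀, (N : ℕ∞) ≤ (Fk k).inf (wedgeLen (σk k)))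
    (F : Set Cantor)
    (hF : MapClusterPt (χS F) Filter.atTop (fun k => χS (↑(Fk k) : Set Cantor))) :
    F.Subsingleton := by
  exact cluster_point_subsingleton' Fk σk hmem hlim F hF
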